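/- Let R be a commutative ring, let H_A : Matrix a₀ a₁ R, H_B : Matrix b₀ b₁ R, H_C : Matrix c₀ c₁ R be matrices over finite index types, and fix q : c₀. Let e_q denote the column vector in R^{c₀} with a 1 in position q and 0 elsewhere. Define ∂₂^{AB} = [I_{a₁}⊗H_B ; H_A⊗I_{b₁}], the 3×3 block matrix ∂₂^{ABC} = [[I_{a₁}⊗H_B⊗I_{c₀}, I_{a₁}⊗I_{b₀}⊗H_C, 0],[H_A⊗I_{b₁}⊗I_{c₀}, 0, I_{a₀}⊗I_{b₁}⊗H_C],[0, H_A⊗I_{b₀}⊗I_{c₁}, I_{a₀}⊗H_B⊗I_{c₁}]], γ₁ the block matrix with (1,1) block I_{a₁×b₀}⊗e_q, (2,2) block I_{a₀×b₁}⊗e_q, and all other blocks zero (row index (a₁×b₀×c₀) ⊕ (a₀×b₁×c₀) ⊕ (a₀×b₀×c₁), column index (a₁×b₀) ⊕ (a₀×b₁)), and γ₂ the block column matrix [I_{a₁×b₁}⊗e_q ; 0 ; 0] (row index (a₁×b₁×c₀) ⊕ (a₁×b₀×c₁) ⊕ (a₀×b₁×c₁), column index a₁×b₁). Then ∂₂^{ABC}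 * γ₂ = γ₁ * ∂₂^{AB}. -/

import Mathlib

open Matrix Kronecker

/-- Degree-1/degree-2 chain map identity for the inclusion of a 2D lifted product code
into the 3D lifted product code: `∂₂^{ABC} * γ₂ = γ₁ * ∂₂^{AB}`, where `γ₂` is the block
column matrix `[I_{a₁×b₁}⊗e_q ; 0 ; 0]` and `γ₁` has diagonal blocks `I_{a₁×b₀}⊗e_q`,
`I_{a₀×b₁}⊗e_q` and zero elsewhere. -/
theorem inclusion_chain_map_degree_two {R : Type*} [CommRing R]
    {a₀ a₁ b₀ b₁ c₀ c₁ : Type*}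
    [Fintype a₀] [Fintype a₁] [Fintype b₀] [Fintype b₁] [Fintype c₀] [Fintype c₁]
    [DecidableEq a₀] [DecidableEq a₁] [DecidableEq b₀] [DecidableEq b₁]
    [DecidableEq c₀] [DecidableEq c₁]
    (HA : Matrix a₀ a₁ R) (HB : Matrix b₀ b₁ R) (HC : Matrix c₀ c₁ R) (q : c₀) :
    -- e_q : the standard basis column vector at position q
    let e : Matrix c₀ Unit R := Matrix.of fun k _ => if k = q then 1 else 0
    -- γ₁: (1,1) block I_{a₁×b₀}⊗e_q, (2,2) block I_{a₀×b₁}⊗e_q, rest zero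
    let γ₁ : Matrix ((a₁ × b₀ × c₀) ⊕ (a₀ × b₁ × c₀) ⊕ (a₀ × b₀ × c₁))
        ((a₁ × b₀) ⊕ (a₀ × b₁)) R :=
      fromBlocks
        (Matrix.reindex (Equiv.prodAssoc a₁ b₀ c₀) (Equiv.prodUnique (a₁ × b₀) Unit)
          ((1 : Matrix (a₁ × b₀) (a₁ × b₀) R) ⊗ₖ e))
        0 0
        (fromRows
          (Matrix.reindex (Equiv.prodAssoc a₀ b₁ c₀) (Equiv.prodUnique (a₀ × b₁) Unit)
            ((1 : Matrix (a₀ × b₁) (a₀ × b₁) R) ⊗ₖ e))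
          0)
    -- γ₂ = [I_{a₁×b₁}⊗e_q ; 0 ; 0]
    let γ₂ : Matrix ((a₁ × b₁ × c₀) ⊕ (a₁ × b₀ × c₁) ⊕ (a₀ × b₁ × c₁)) (a₁ × b₁) R :=
      fromRows
        (Matrix.reindex (Equiv.prodAssoc a₁ b₁ c₀) (Equiv.prodUnique (a₁ × b₁) Unit)
          ((1 : Matrix (a₁ × b₁) (a₁ × b₁) R) ⊗ₖ e))
        0
    -- ∂₂^{ABC} * γ₂ = γ₁ * ∂₂^{AB}
    (fromBlocks
      ((1 : Matrix a₁ a₁ R) ⊗ₖ (HB ⊗ₖ (1 : Matrix c₀ c₀ R)))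
      (fromCols ((1 : Matrix a₁ a₁ R) ⊗ₖ ((1 : Matrix b₀ b₀ R) ⊗ₖ HC)) 0)
      (fromRows (HA ⊗ₖ ((1 : Matrix b₁ b₁ R) ⊗ₖ (1 : Matrix c₀ c₀ R))) 0)
      (fromBlocks
        0 ((1 : Matrix a₀ a₀ R) ⊗ₖ ((1 : Matrix b₁ b₁ R) ⊗ₖ HC))
        (HA ⊗ₖ ((1 : Matrix b₀ b₀ R) ⊗ₖ (1 : Matrix c₁ c₁ R)))
        ((1 : Matrix a₀ a₀ R) ⊗ₖ (HB ⊗ₖ (1 : Matrix c₁ c₁ R))))) * γ₂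
    = γ₁ * fromRows ((1 : Matrix a₁ a₁ R) ⊗ₖ HB) (HA ⊗ₖ (1 : Matrix b₁ b₁ R)) := by
  intro e γ₁ γ₂
  ext i j
  obtain ⟨x, y, k⟩ | ⟨x, y, k⟩ | ⟨x, y, k⟩ := i <;>
    simp [γ₁, γ₂, e, Matrix.mul_apply, Fintype.sum_sum_type, Fintype.sum_prod_type,
      Matrix.fromBlocks, Matrix.fromCols, Matrix.one_apply,
      Matrix.submatrix, ite_and, mul_ite, ite_mul, Prod.ext_iff] <;>
    split_ifs <;> rfl
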